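/- If at some time instant more than k tasks are active on a set of positive measure, then no assignment of k single-interval-at-a-time flight plans achieves full coverage: any assignment P of k plans, where the intervals of each plan are pairwise disjoint, satisfies FT(P) < Σ_i |T_i|. -/

import Mathlib

open MeasureTheory
open scoped Classical ENNReal

/-- If at some time instants forming a set of positive measure more than `k`
tasks are active, then no assignment of `k` flight plans, each filming one
task at a time (pairwise disjoint intervals within a plan), achieves full
coverage: the filming time is strictly less than the total task time. -/
theorem no_full_coverage_when_overloaded {n k : ℕ} (T : Fin n → Set ℝ)
    (hT : ∀ i, MeasurableSet (T i))
    (hTfin : ∀ i, volume (T i) < ⊤)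
    (P : Fin k → Finset (Set ℝ × Fin n))
    (hI : ∀ j, ∀ q ∈ P j, MeasurableSet q.1 ∧ q.1 ⊆ T q.2)
    (hdisj : ∀ j, Set.Pairwise (↑(P j) : Set (Set ℝ × Fin n))
        fun a b => Disjoint a.1 b.1)
    (S : Set ℝ) (hS : MeasurableSet S) (hSpos : 0 < volume S)
    (hact : ∀ t ∈ S, k + 1 ≤ (Finset.univ.filter fun i => t ∈ T i).card) :
    ∑ i, volume (⋃ j, ⋃ q ∈ (P j).filter (fun q => q.2 = i), q.1) <
      ∑ i, volume (T i) := by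
  set C : Fin n → Set ℝ := fun i => ⋃ j, ⋃ q ∈ (P j).filter (fun q => q.2 = i), q.1 with hC
  have hCmeas : ∀ i, MeasurableSet (C i) := by
    intro i
    apply MeasurableSet.iUnion; intro j
    exact MeasurableSet.biUnion ((P j).filter _).countable_toSet
      (fun q hq => (hI j q (Finset.mem_filter.mp hq).1).1)
  have hCsub : ∀ i, C i ⊆ T i := by
    intro i t ht
    simp only [hC, Set.mem_iUnion, exists_prop] at ht
    obtain ⟨j, q, hq, htq⟩ := ht
    rcases Finset.mem_filter.mp hq with ⟨hq1, hq2⟩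
    have := (hI j q hq1).2 htq
    rwa [hq2] at this
  -- at each time, at most k tasks are covered
  have hcount : ∀ t : ℝ, (Finset.univ.filter fun i => t ∈ C i).card ≤ k := by
    intro t
    have hex : ∀ i ∈ Finset.univ.filter (fun i => t ∈ C i),
        ∃ j : Fin k, ∃ q ∈ P j, q.2 = i ∧ t ∈ q.1 := by
      intro i hi
      have ht : t ∈ C i := (Finset.mem_filter.mp hi).2
      simp only [hC, Set.mem_iUnion, exists_prop] at ht
      obtain ⟨j, q, hq, htq⟩ := ht
      rcases Finset.mem_filter.mp hq with ⟨hq1, hq2⟩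
      exact ⟨j, q, hq1, hq2, htq⟩
    rcases Nat.eq_zero_or_pos k with hk | hk
    · subst hk
      have : (Finset.univ.filter fun i => t ∈ C i) = ∅ := by
        ext i
        simp [hC]
      simp [this]
    haveI : Nonempty (Fin k) := ⟨⟨0, hk⟩⟩
    choose! f g hg1 hg2 hg3 using hex
    calc (Finset.univ.filter fun i => t ∈ C i).card
        ≤ (Finset.univ : Finset (Fin k)).card := by
          apply Finset.card_le_card_of_injOn f (fun _ _ => Finset.mem_univ _)
          intro i1 h1 i2 h2 hfe
          have hd := hdisj (f i1)
          have hq1 : g i1 ∈ P (f i1) := hg1 i1 h1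
          have hq2 : g i2 ∈ P (f i1) := hfe ▸ hg1 i2 h2
          have heq : g i1 = g i2 := by
            by_contra hne
            have := hd hq1 hq2 hne
            exact (Set.disjoint_left.mp this (hg3 i1 h1)) (hg3 i2 h2)
          rw [← hg2 i1 h1, ← hg2 i2 h2, heq]
      _ = k := by simp
  have hTmeas : ∀ i, Measurable ((T i).indicator (fun _ => (1 : ℝ≥0∞))) :=
    fun i => measurable_const.indicator (hT i)
  have hCmeas' : ∀ i, Measurable ((C i).indicator (fun _ => (1 : ℝ≥0∞))) :=
    fun i => measurable_const.indicator (hCmeas i)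
  have key : ∀ (A : Fin n → Set ℝ), (∀ i, MeasurableSet (A i)) →
      ∑ i, volume (A i ∩ S) = ∫⁻ t in S, ∑ i, (A i).indicator (fun _ => (1 : ℝ≥0∞)) t := by
    intro A hA
    rw [lintegral_finset_sum _ (fun i _ => measurable_const.indicator (hA i))]
    congr 1
    ext i
    rw [lintegral_indicator (hA i)]
    simp [Measure.restrict_restrict (hA i), Set.inter_comm]
  have hcard : ∀ (A : Fin n → Set ℝ) (t : ℝ),
      ∑ i, (A i).indicator (fun _ => (1 : ℝ≥0∞)) t
        = ((Finset.univ.filter fun i => t ∈ A i).card : ℝ≥0∞) := by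
    intro A t
    rw [Finset.card_filter]
    push_cast
    simp [Set.indicator_apply]
  -- bound coverage on S
  have hCS : ∑ i, volume (C i ∩ S) ≤ k * volume S := by
    rw [key C hCmeas]
    calc ∫⁻ t in S, ∑ i, (C i).indicator (fun _ => (1 : ℝ≥0∞)) t
        ≤ ∫⁻ _ in S, (k : ℝ≥0∞) := by
          apply lintegral_mono
          intro t
          dsimp only
          rw [hcard]
          exact_mod_cast Nat.cast_le.mpr (hcount t)
      _ = k * volume S := by simp [mul_comm]
  -- bound tasks on S
  have hTS : (k + 1 : ℝ≥0∞) * volume S ≤ ∑ i, volume (T i ∩ S) := by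
    rw [key T hT]
    calc (k + 1 : ℝ≥0∞) * volume S = ∫⁻ _ in S, (k + 1 : ℝ≥0∞) := by simp [mul_comm]
      _ ≤ ∫⁻ t in S, ∑ i, (T i).indicator (fun _ => (1 : ℝ≥0∞)) t := by
          apply setLIntegral_mono_ae (Measurable.aemeasurable ?_) ?_
          · exact Finset.measurable_sum _ (fun i _ => hTmeas i)
          · filter_upwards with t ht
            rw [hcard]
            have := hact t ht
            exact_mod_cast Nat.cast_le.mpr this
  have hTfinSum : ∑ i, volume (T i) < ⊤ := by
    apply ENNReal.sum_lt_top.mpr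
    intro i _
    exact hTfin i
  have hTSfin : ∑ i, volume (T i ∩ S) < ⊤ :=
    lt_of_le_of_lt (Finset.sum_le_sum fun i _ =>
      measure_mono (Set.inter_subset_left)) hTfinSum
  have hSfin : volume S < ⊤ := by
    by_contra h
    push_neg at h
    have h' : volume S = ⊤ := top_le_iff.mp h
    rw [h'] at hTS
    have : (k + 1 : ℝ≥0∞) * ⊤ = ⊤ := by
      apply ENNReal.mul_top
      simp
    rw [this] at hTS
    exact absurd (top_le_iff.mp hTS ▸ hTSfin) (by simp [top_le_iff.mp hTS])
  have hstrict : (k : ℝ≥0∞) * volume S < (k + 1 : ℝ≥0∞) * volume S := by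
    rw [add_mul, one_mul]
    exact ENNReal.lt_add_right (ENNReal.mul_ne_top (by simp) hSfin.ne) hSpos.ne'
  have hdiff : ∑ i, volume (T i \ S) < ⊤ :=
    lt_of_le_of_lt (Finset.sum_le_sum fun i _ =>
      measure_mono (Set.diff_subset)) hTfinSum
  calc ∑ i, volume (C i)
      = ∑ i, (volume (C i ∩ S) + volume (C i \ S)) := by
        refine Finset.sum_congr rfl fun i _ => ?_
        rw [measure_inter_add_diff _ hS]
    _ = (∑ i, volume (C i ∩ S)) + ∑ i, volume (C i \ S) := Finset.sum_add_distrib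
    _ ≤ (k : ℝ≥0∞) * volume S + ∑ i, volume (T i \ S) := by
        apply add_le_add hCS
        exact Finset.sum_le_sum fun i _ => measure_mono (Set.diff_subset_diff_left (hCsub i))
    _ < (k + 1 : ℝ≥0∞) * volume S + ∑ i, volume (T i \ S) :=
        ENNReal.add_lt_add_right hdiff.ne hstrict
    _ ≤ (∑ i, volume (T i ∩ S)) + ∑ i, volume (T i \ S) := add_le_add_left hTS _
    _ = ∑ i, (volume (T i ∩ S) + volume (T i \ S)) := Finset.sum_add_distrib.symm
    _ = ∑ i, volume (T i) := by
        refine Finset.sum_congr rfl fun i _ => ?_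
        rw [measure_inter_add_diff _ hS]
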